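/- Let a < b be real numbers and let X be a random variable taking values in [a,b] with mean μ satisfying l ≤ μ ≤ u, where a ≤ l ≤ u ≤ b. If l ≥ (a+b)/2, then for every s ≥ 0, E[exp(s(X−μ))] ≤ exp(s² (l−a)(b−l) / 2). -/

import Mathlib

open MeasureTheory

private lemma nonneg_of_deriv (f f' : ℝ → ℝ)
    (hd : ∀ x ∈ Set.Ici (0:ℝ), HasDerivAt f (f' x) x)
    (h0 : f 0 = 0) (hf' : ∀ x ∈ Set.Ici (0:ℝ), 0 ≤ f' x) :
    ∀ x ∈ Set.Ici (0:ℝ), 0 ≤ f x := by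
  have hmono : MonotoneOn f (Set.Ici (0:ℝ)) := by
    apply monotoneOn_of_deriv_nonneg (convex_Ici 0)
    · exact fun y hy => (hd y hy).continuousAt.continuousWithinAt
    · intro y hy
      rw [interior_Ici] at hy
      exact ((hd y (Set.mem_Ici.mpr (Set.mem_Ioi.mp hy).le)).differentiableAt).differentiableWithinAt
    · intro y hy
      rw [interior_Ici] at hy
      rw [(hd y (Set.mem_Ici.mpr (Set.mem_Ioi.mp hy).le)).deriv]
      exact hf' y (Set.mem_Ici.mpr (Set.mem_Ioi.mp hy).le)
  intro x hx
  have := hmono Set.self_mem_Ici hx hx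
  linarith [this, h0.symm ▸ this]

private lemma key_ineq (p q h : ℝ) (hq : 0 ≤ q) (hpq : p + q = 1) (hp : 1/2 ≤ p)
    (hh : 0 ≤ h) :
    q * Real.exp (-(h*p)) + p * Real.exp (h*q) ≤ Real.exp (p*q*h^2/2) := by
  have hp0 : (0:ℝ) < p := by linarith
  have hD : ∀ x : ℝ, 0 < q + p * Real.exp x := fun x => by positivity
  set F : ℝ → ℝ := fun x => p*x + p*q*x^2/2 - Real.log (q + p*Real.exp x) with hF
  set G : ℝ → ℝ := fun x => p + p*q*x - p*Real.exp x / (q + p*Real.exp x) with hG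
  have hdF : ∀ x : ℝ, HasDerivAt F (G x) x := by
    intro x
    have h1 : HasDerivAt (fun x : ℝ => q + p * Real.exp x) (p * Real.exp x) x := by
      simpa using ((Real.hasDerivAt_exp x).const_mul p).const_add q
    have h2 := h1.log (hD x).ne'
    have h3 : HasDerivAt (fun x : ℝ => p*x + p*q*x^2/2) (p + p*q*x) x := by
      have := ((hasDerivAt_pow 2 x).const_mul (p*q/2)).const_add 0
      have h4 : HasDerivAt (fun x : ℝ => p * x) p x := by
        simpa using (hasDerivAt_id x).const_mul p
      have h5 : HasDerivAt (fun x : ℝ => p*q*x^2/2) (p*q*x) x := by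
        have h := (hasDerivAt_pow 2 x).const_mul (p*q/2)
        norm_num at h
        have e1 : (fun x : ℝ => p*q*x^2/2) = (fun x : ℝ => p*q/2 * x^2) := by
          funext y; ring
        have e2 : p*q*x = p*q/2*(2*x) := by ring
        rw [e1, e2]; exact h
      exact h4.add h5
    exact h3.sub h2
  have hdG : ∀ x : ℝ, HasDerivAt G
      (p*q - p * q * Real.exp x / (q + p*Real.exp x)^2) x := by
    intro x
    have h1 : HasDerivAt (fun x : ℝ => q + p * Real.exp x) (p * Real.exp x) x := by
      simpa using ((Real.hasDerivAt_exp x).const_mul p).const_add q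
    have h2 : HasDerivAt (fun x : ℝ => p * Real.exp x) (p * Real.exp x) x :=
      (Real.hasDerivAt_exp x).const_mul p
    have h3 := h2.div h1 (hD x).ne'
    have h4 : HasDerivAt (fun x : ℝ => p + p*q*x) (p*q) x := by
      simpa using ((hasDerivAt_id x).const_mul (p*q)).const_add p
    have h5 := h4.sub h3
    refine h5.congr_deriv ?_
    have := (hD x).ne'
    field_simp
    ring
  have hG0 : G 0 = 0 := by
    simp only [hG]
    rw [Real.exp_zero]
    have : q + p * 1 = 1 := by linarith
    rw [this]
    ring
  have hGnonneg : ∀ x ∈ Set.Ici (0:ℝ), 0 ≤ G x := by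
    apply nonneg_of_deriv G (fun x => p*q - p * q * Real.exp x / (q + p*Real.exp x)^2)
      (fun x _ => hdG x) hG0
    intro x hx
    have hy : (1:ℝ) ≤ Real.exp x := Real.one_le_exp hx
    have hsq : Real.exp x ≤ (q + p*Real.exp x)^2 := by
      nlinarith [sq_nonneg (p*(Real.exp x - 1)),
        mul_nonneg (by linarith : (0:ℝ) ≤ 2*p-1) (by linarith : (0:ℝ) ≤ Real.exp x - 1)]
    have hD2 : (0:ℝ) < (q + p*Real.exp x)^2 := by positivity
    have : p * q * Real.exp x / (q + p*Real.exp x)^2 ≤ p * q := by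
      rw [div_le_iff₀ hD2]
      nlinarith [mul_nonneg hp0.le hq]
    linarith
  have hF0 : F 0 = 0 := by
    simp only [hF]
    rw [Real.exp_zero]
    have : q + p * 1 = 1 := by linarith
    rw [this, Real.log_one]
    ring
  have hFnonneg : 0 ≤ F h := nonneg_of_deriv F G (fun x _ => hdF x) hF0 hGnonneg h hh
  -- F h ≥ 0 means log (q + p e^h) ≤ p h + p q h²/2
  have hlog : q + p * Real.exp h ≤ Real.exp (p*h + p*q*h^2/2) := by
    rw [← Real.log_le_iff_le_exp (hD h)]
    simp only [hF] at hFnonneg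
    linarith
  have hexp : q * Real.exp (-(h*p)) + p * Real.exp (h*q)
      = (q + p * Real.exp h) * Real.exp (-(h*p)) := by
    have : h * q = h + -(h*p) := by nlinarith
    rw [this, Real.exp_add]
    ring
  rw [hexp]
  calc (q + p * Real.exp h) * Real.exp (-(h*p))
      ≤ Real.exp (p*h + p*q*h^2/2) * Real.exp (-(h*p)) := by
        apply mul_le_mul_of_nonneg_right hlog (Real.exp_nonneg _)
    _ = Real.exp (p*q*h^2/2) := by
        rw [← Real.exp_add]; ring_nf

/-- MGF bound for a bounded random variable whose mean lower bound satisfies `l ≥ (a+b)/2`. -/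
theorem mgf_bound_high_lower_bound
    {Ω : Type*} [MeasurableSpace Ω] (P : Measure Ω) [IsProbabilityMeasure P]
    (a b l u μ : ℝ) (hab : a < b) (hal : a ≤ l) (hlu : l ≤ u) (hub : u ≤ b)
    (hl : (a + b) / 2 ≤ l)
    (X : Ω → ℝ) (hmeas : Measurable X)
    (hbdd : ∀ᵐ ω ∂P, X ω ∈ Set.Icc a b)
    (hmean : ∫ ω, X ω ∂P = μ)
    (hlμ : l ≤ μ) (hμu : μ ≤ u)
    (s : ℝ) (hs : 0 ≤ s) :
    ∫ ω, Real.exp (s * (X ω - μ)) ∂P ≤ Real.exp (s ^ 2 * (l - a) * (b - l) / 2) := by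
  have hba : (0:ℝ) < b - a := by linarith
  have hμb : μ ≤ b := le_trans hμu hub
  have haμ : a ≤ μ := le_trans hal hlμ
  set c1 := Real.exp (s*(a-μ)) with hc1
  set c2 := Real.exp (s*(b-μ)) with hc2
  -- pointwise convexity bound
  have hpt : ∀ᵐ ω ∂P, Real.exp (s*(X ω - μ)) ≤ ((b - X ω)*c1 + (X ω - a)*c2)/(b-a) := by
    filter_upwards [hbdd] with ω hω
    obtain ⟨hωa, hωb⟩ := hω
    set t := (X ω - a)/(b-a) with ht
    have ht0 : 0 ≤ t := div_nonneg (by linarith) hba.le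
    have ht1 : t ≤ 1 := by rw [ht, div_le_one hba]; linarith
    have hconv := convexOn_exp.2 (Set.mem_univ (s*(a-μ))) (Set.mem_univ (s*(b-μ)))
      (by linarith : (0:ℝ) ≤ 1 - t) ht0 (by ring)
    simp only [smul_eq_mul] at hconv
    have harg : (1-t) * (s*(a-μ)) + t * (s*(b-μ)) = s*(X ω - μ) := by
      rw [ht]; field_simp; try ring
    rw [harg] at hconv
    have hrhs : (1-t)*c1 + t*c2 = ((b - X ω)*c1 + (X ω - a)*c2)/(b-a) := by
      rw [ht]; field_simp; try ring
    rw [← hrhs]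
    exact hconv
  -- integrability
  have hXint : Integrable X P := by
    apply Integrable.mono' (integrable_const (max |a| |b|)) hmeas.aestronglyMeasurable
    filter_upwards [hbdd] with ω hω
    rw [Real.norm_eq_abs]
    exact abs_le_max_abs_abs hω.1 hω.2
  have hEint : Integrable (fun ω => Real.exp (s*(X ω - μ))) P := by
    apply Integrable.mono' (integrable_const c2)
      ((((hmeas.sub_const μ).const_mul s).exp).aestronglyMeasurable)
    filter_upwards [hbdd] with ω hω
    rw [Real.norm_eq_abs, Real.abs_exp, hc2]
    exact Real.exp_le_exp.mpr (by nlinarith [hω.2])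
  have hfun : (fun ω => ((b - X ω)*c1 + (X ω - a)*c2)/(b-a))
      = fun ω => (b*c1 - a*c2)/(b-a) + ((c2-c1)/(b-a)) * X ω := by
    funext ω; field_simp; ring
  have hRint : Integrable (fun ω => ((b - X ω)*c1 + (X ω - a)*c2)/(b-a)) P := by
    rw [hfun]
    exact (integrable_const _).add (hXint.const_mul _)
  -- integrate
  have hint : ∫ ω, Real.exp (s*(X ω - μ)) ∂P ≤ ((b-μ)*c1 + (μ-a)*c2)/(b-a) := by
    calc ∫ ω, Real.exp (s*(X ω - μ)) ∂P
        ≤ ∫ ω, ((b - X ω)*c1 + (X ω - a)*c2)/(b-a) ∂P :=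
          integral_mono_ae hEint hRint hpt
      _ = ((b-μ)*c1 + (μ-a)*c2)/(b-a) := by
          rw [hfun, integral_add (integrable_const _) (hXint.const_mul _),
            integral_const_mul, integral_const, hmean]
          simp only [measure_univ, ENNReal.toReal_one, probReal_univ, smul_eq_mul, one_mul]
          field_simp
          try ring
  -- apply the key inequality
  set p := (μ-a)/(b-a) with hp'
  set q := (b-μ)/(b-a) with hq'
  have hkey := key_ineq p q (s*(b-a)) (div_nonneg (by linarith) hba.le)
    (by rw [hp', hq']; field_simp; ring)
    (by rw [hp', le_div_iff₀ hba]; linarith)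
    (mul_nonneg hs hba.le)
  have e1 : -(s*(b-a)*p) = s*(a-μ) := by rw [hp']; field_simp; ring
  have e2 : s*(b-a)*q = s*(b-μ) := by rw [hq']; field_simp
  have e3 : p*q*(s*(b-a))^2/2 = s^2*(μ-a)*(b-μ)/2 := by
    rw [hp', hq']; field_simp
  rw [e1, e2, e3] at hkey
  have e4 : ((b-μ)*c1 + (μ-a)*c2)/(b-a) = q*c1 + p*c2 := by
    rw [hp', hq']; field_simp; try ring
  have hfin : Real.exp (s^2*(μ-a)*(b-μ)/2) ≤ Real.exp (s ^ 2 * (l - a) * (b - l) / 2) := by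
    apply Real.exp_le_exp.mpr
    nlinarith [sq_nonneg s, mul_nonneg (sq_nonneg s)
      (mul_nonneg (by linarith : (0:ℝ) ≤ μ - l) (by linarith : (0:ℝ) ≤ μ + l - a - b))]
  calc ∫ ω, Real.exp (s*(X ω - μ)) ∂P ≤ ((b-μ)*c1 + (μ-a)*c2)/(b-a) := hint
    _ = q*c1 + p*c2 := e4
    _ ≤ Real.exp (s^2*(μ-a)*(b-μ)/2) := hkey
    _ ≤ Real.exp (s ^ 2 * (l - a) * (b - l) / 2) := hfin
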